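/- Let n ≥ 2, r ≥ 2, and let s = gcd(n+1, r+1). Then the rank of H_CI over ℚ equals nr − (s−1), and the rank of H_CII over ℚ also equals nr − (s−1); i.e., corank(H_CI) = s − 1 = corank(H_CII). -/

import Mathlib

open Matrix Finset

section AuxLemmas

lemma aux_sum_range_eq {N : ℕ} [NeZero N] (f : ZMod N → ℚ) :
    ∑ i ∈ Finset.range N, f (i : ZMod N) = ∑ t : ZMod N, f t := by
  refine Finset.sum_nbij' (fun i => ((i : ℕ) : ZMod N)) (fun t => t.val) ?_ ?_ ?_ ?_ ?_
  · intro a _; exact Finset.mem_univ _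
  · intro t _; exact Finset.mem_range.mpr t.val_lt
  · intro a ha; exact ZMod.val_cast_of_lt (Finset.mem_range.mp ha)
  · intro t _; exact ZMod.natCast_rightInverse t
  · intro a _; rfl

lemma aux_sum_shift {N : ℕ} [NeZero N] (f : ZMod N → ℚ) (c : ZMod N) :
    ∑ t : ZMod N, f (c - t) = ∑ t : ZMod N, f t :=
  Fintype.sum_equiv (Equiv.subLeft c) _ _ (fun _ => rfl)

/-- full-cycle sums of a zero-sum function vanish -/
lemma aux_window {s : ℕ} [NeZero s] {w : ZMod s → ℚ} (hw : ∑ t : ZMod s, w t = 0)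
    (A : ZMod s) {m : ℕ} (hm : s ∣ m) : ∑ i ∈ Finset.range m, w (A - (i : ℕ)) = 0 := by
  obtain ⟨k, rfl⟩ := hm
  induction k with
  | zero => simp
  | succ k ih =>
    have h1 : s * (k + 1) = s * k + s := by ring
    rw [h1, Finset.sum_range_add, ih, zero_add]
    have h2 : ∀ x ∈ Finset.range s, w (A - ((s * k + x : ℕ) : ZMod s)) = w (A - (x : ℕ)) := by
      intro x _
      congr 1
      push_cast [ZMod.natCast_self]
      ring
    rw [Finset.sum_congr rfl h2]
    rw [aux_sum_range_eq (fun t => w (A - t)), aux_sum_shift]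
    exact hw

lemma aux_zmod_cast_eq {N : ℕ} (a b k : ℤ) (h : a - b = k * N) :
    ((a : ZMod N) = (b : ZMod N)) := by
  have h2 : ((a - b : ℤ) : ZMod N) = 0 := by
    rw [h]; push_cast [ZMod.natCast_self]; ring
  push_cast at h2
  exact sub_eq_zero.mp h2

lemma aux_sum_mul {s : ℕ} [NeZero s] (f : ZMod s → ℚ) (m : ℕ) :
    ∑ i ∈ Finset.range (m * s), f ((i : ℕ) : ZMod s) = m • ∑ b : ZMod s, f b := by
  induction m with
  | zero => simp
  | succ m ih =>
    have h1 : (m + 1) * s = m * s + s := by ring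
    rw [h1, Finset.sum_range_add, ih]
    have h2 : ∀ x ∈ Finset.range s, f ((m * s + x : ℕ) : ZMod s) = f ((x : ℕ) : ZMod s) := by
      intro x _
      congr 1
      push_cast [ZMod.natCast_self]
      ring
    rw [Finset.sum_congr rfl h2, aux_sum_range_eq f]
    rw [succ_nsmul]

end AuxLemmas

theorem aux_rank (n r : ℕ) (hn : 2 ≤ n) (hr : 2 ≤ r)
    (H : Matrix (Fin n × Fin r) (Fin n × Fin r) ℚ)
    (hH : ∀ (α β : Fin n) (j k : Fin r), H (α, j) (β, k) =
      (if (α:ℕ) ≤ (β:ℕ) ∧ (k:ℕ) ≤ (j:ℕ) then 1 else 0) -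
      (if (β:ℕ) ≤ (α:ℕ) ∧ (j:ℕ) ≤ (k:ℕ) then 1 else 0)) :
    H.rank = n * r - (Nat.gcd (n + 1) (r + 1) - 1) := by
  have hs0 : 0 < Nat.gcd (n + 1) (r + 1) := Nat.gcd_pos_of_pos_left _ (by omega)
  set s := Nat.gcd (n + 1) (r + 1) with hsdef
  haveI : NeZero s := ⟨hs0.ne'⟩
  have hsn : s ∣ n + 1 := Nat.gcd_dvd_left _ _
  have hsr : s ∣ r + 1 := Nat.gcd_dvd_right _ _
  -- the coordinate-extension helper
  set vv : (Fin n × Fin r → ℚ) → ℕ → ℕ → ℚ :=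
    fun v b k => if h : b < n ∧ k < r then v (⟨b, h.1⟩, ⟨k, h.2⟩) else 0 with hvv
  -- splitting of the matrix-vector product
  have split : ∀ (v : Fin n × Fin r → ℚ) (α : Fin n) (j : Fin r),
      H.mulVec v (α, j) =
        (∑ b ∈ Ico (α:ℕ) n, ∑ k ∈ range ((j:ℕ)+1), vv v b k)
        - (∑ b ∈ range ((α:ℕ)+1), ∑ k ∈ Ico (j:ℕ) r, vv v b k) := by
    intro v α j
    have f1 : (range n).filter (fun b => (α:ℕ) ≤ b) = Ico (α:ℕ) n := by
      ext x; simp [Finset.mem_Ico]; omega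
    have f2 : (range r).filter (fun k => k ≤ (j:ℕ)) = range ((j:ℕ)+1) := by
      ext x; simp; omega
    have f3 : (range n).filter (fun b => b ≤ (α:ℕ)) = range ((α:ℕ)+1) := by
      ext x; simp; omega
    have f4 : (range r).filter (fun k => (j:ℕ) ≤ k) = Ico (j:ℕ) r := by
      ext x; simp [Finset.mem_Ico]; omega
    have step : H.mulVec v (α, j) =
        (∑ b ∈ range n, ∑ k ∈ range r, if (α:ℕ) ≤ b ∧ k ≤ (j:ℕ) then vv v b k else 0)
        - (∑ b ∈ range n, ∑ k ∈ range r, if b ≤ (α:ℕ) ∧ (j:ℕ) ≤ k then vv v b k else 0) := by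
      rw [Matrix.mulVec, dotProduct, Fintype.sum_prod_type]
      rw [← Fin.sum_univ_eq_sum_range (fun b => ∑ k ∈ range r,
            if (α:ℕ) ≤ b ∧ k ≤ (j:ℕ) then vv v b k else 0) n,
          ← Fin.sum_univ_eq_sum_range (fun b => ∑ k ∈ range r,
            if b ≤ (α:ℕ) ∧ (j:ℕ) ≤ k then vv v b k else 0) n,
          ← Finset.sum_sub_distrib]
      refine Finset.sum_congr rfl (fun β _ => ?_)
      rw [← Fin.sum_univ_eq_sum_range (fun k =>
            if (α:ℕ) ≤ (β:ℕ) ∧ k ≤ (j:ℕ) then vv v (β:ℕ) k else 0) r,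
          ← Fin.sum_univ_eq_sum_range (fun k =>
            if (β:ℕ) ≤ (α:ℕ) ∧ (j:ℕ) ≤ k then vv v (β:ℕ) k else 0) r,
          ← Finset.sum_sub_distrib]
      refine Finset.sum_congr rfl (fun κ _ => ?_)
      have hvvk : vv v (β:ℕ) (κ:ℕ) = v (β, κ) := by
        rw [hvv]; simp only [β.isLt, κ.isLt, and_self, dif_pos]
      rw [hH α β j κ, hvvk, sub_mul]
      by_cases h1 : (α:ℕ) ≤ (β:ℕ) ∧ (κ:ℕ) ≤ (j:ℕ) <;>
        by_cases h2 : (β:ℕ) ≤ (α:ℕ) ∧ (j:ℕ) ≤ (κ:ℕ) <;>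
        simp [h1, h2]
    rw [step]
    congr 1
    · rw [← f1, Finset.sum_filter]
      refine Finset.sum_congr rfl (fun b _ => ?_)
      rw [← f2, Finset.sum_filter, ← Finset.sum_filter]
      by_cases h : (α:ℕ) ≤ b <;> simp [h, Finset.sum_filter]
    · rw [← f3, Finset.sum_filter]
      refine Finset.sum_congr rfl (fun b _ => ?_)
      rw [← f4, Finset.sum_filter, ← Finset.sum_filter]
      by_cases h : b ≤ (α:ℕ) <;> simp [h, Finset.sum_filter]
  -- index map and precomposition linear map
  set cmap : Fin n × Fin r → ZMod s :=
    fun p => ((((r : ℤ) - 1 - ((p.2 : ℕ) : ℤ) - ((p.1 : ℕ) : ℤ)) : ℤ) : ZMod s) with hcmap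
  set Phi : (ZMod s → ℚ) →ₗ[ℚ] (Fin n × Fin r → ℚ) := LinearMap.funLeft ℚ ℚ cmap with hPhi
  have claimA : ∀ (w : ZMod s → ℚ), (∑ t : ZMod s, w t) = 0 → H.mulVec (Phi w) = 0 := by
    intro w hw
    set g : ℕ → ℕ → ℚ :=
      fun b k => w ((((r : ℤ) - 1 - (k : ℤ) - (b : ℤ)) : ℤ) : ZMod s) with hgdef
    funext p
    obtain ⟨α, j⟩ := p
    simp only [Pi.zero_apply]
    rw [split]
    have hswap1 : ∀ b ∈ Ico (α:ℕ) n, ∑ k ∈ range ((j:ℕ)+1), vv (Phi w) b k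
        = ∑ k ∈ range ((j:ℕ)+1), g b k := by
      intro b hb
      refine Finset.sum_congr rfl (fun k hk => ?_)
      have hbn : b < n := (Finset.mem_Ico.mp hb).2
      have hkr : k < r := by have := Finset.mem_range.mp hk; omega
      rw [hvv]; simp only [dif_pos (⟨hbn, hkr⟩ : b < n ∧ k < r)]
      rfl
    have hswap2 : ∀ b ∈ range ((α:ℕ)+1), ∑ k ∈ Ico (j:ℕ) r, vv (Phi w) b k
        = ∑ k ∈ Ico (j:ℕ) r, g b k := by
      intro b hb
      refine Finset.sum_congr rfl (fun k hk => ?_)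
      have hbn : b < n := by have := Finset.mem_range.mp hb; have := α.isLt; omega
      have hkr : k < r := (Finset.mem_Ico.mp hk).2
      rw [hvv]; simp only [dif_pos (⟨hbn, hkr⟩ : b < n ∧ k < r)]
      rfl
    rw [Finset.sum_congr rfl hswap1, Finset.sum_congr rfl hswap2]
    have I1 : ∀ b : ℕ, (∑ k ∈ range ((j:ℕ)+1), g b k)
        = - ∑ k ∈ Ico (j:ℕ) r, g (b+1) k := by
      intro b
      have e1 : ∑ k ∈ range ((j:ℕ)+1), g b k
          = ∑ i ∈ range ((j:ℕ)+1), w (((((r:ℤ)-1-(b:ℤ)) : ℤ) : ZMod s) - (i:ℕ)) := by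
        refine Finset.sum_congr rfl (fun i _ => ?_)
        rw [hgdef]; congr 1; push_cast; ring
      have e2 : ∑ k ∈ Ico (j:ℕ) r, g (b+1) k
          = ∑ i ∈ range (r - (j:ℕ)), w (((((r:ℤ)-1-(b:ℤ)) : ℤ) : ZMod s) - (((j:ℕ)+1+i : ℕ))) := by
        rw [Finset.sum_Ico_eq_sum_range]
        refine Finset.sum_congr rfl (fun i _ => ?_)
        rw [hgdef]; congr 1; push_cast; ring
      have e3 : (0:ℚ) = ∑ i ∈ range (r+1), w (((((r:ℤ)-1-(b:ℤ)) : ℤ) : ZMod s) - (i:ℕ)) :=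
        (aux_window hw _ hsr).symm
      have e4 : r + 1 = ((j:ℕ)+1) + (r - (j:ℕ)) := by omega
      rw [e4, Finset.sum_range_add] at e3
      rw [e1, e2]
      linarith [e3]
    rw [Finset.sum_congr rfl (fun b _ => I1 b), Finset.sum_neg_distrib]
    have hA1 : ∑ b ∈ Ico (α:ℕ) n, ∑ k ∈ Ico (j:ℕ) r, g (b+1) k
        = ∑ b ∈ Ico ((α:ℕ)+1) (n+1), ∑ k ∈ Ico (j:ℕ) r, g b k := by
      rw [Finset.sum_Ico_eq_sum_range, Finset.sum_Ico_eq_sum_range]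
      have : n + 1 - ((α:ℕ)+1) = n - (α:ℕ) := by omega
      rw [this]
      refine Finset.sum_congr rfl (fun i _ => ?_)
      have : (α:ℕ) + i + 1 = (α:ℕ) + 1 + i := by omega
      rw [this]
    rw [hA1]
    have hA2 : ∑ b ∈ Ico ((α:ℕ)+1) (n+1), ∑ k ∈ Ico (j:ℕ) r, g b k
        + ∑ b ∈ range ((α:ℕ)+1), ∑ k ∈ Ico (j:ℕ) r, g b k
        = ∑ b ∈ range (n+1), ∑ k ∈ Ico (j:ℕ) r, g b k := by
      rw [Finset.range_eq_Ico, add_comm, Finset.range_eq_Ico]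
      exact Finset.sum_Ico_consecutive (fun b => ∑ k ∈ Ico (j:ℕ) r, g b k) (m := 0) (n := (α:ℕ)+1) (k := n+1) (by omega) (by omega)
    have hA3 : ∑ b ∈ range (n+1), ∑ k ∈ Ico (j:ℕ) r, g b k = 0 := by
      rw [Finset.sum_comm]
      refine Finset.sum_eq_zero (fun k _ => ?_)
      have : ∀ b ∈ range (n+1), g b k
          = w (((((r:ℤ)-1-(k:ℤ)) : ℤ) : ZMod s) - (b:ℕ)) := by
        intro b _
        rw [hgdef]; congr 1; push_cast; ring
      rw [Finset.sum_congr rfl this]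
      exact aux_window hw _ hsn
    linarith [hA2, hA3]
  -- Claim C : the kernel is contained in the image of Phi
  have claimC : ∀ v : Fin n × Fin r → ℚ, H.mulVec v = 0 →
      ∃ w : ZMod s → ℚ, (∑ t : ZMod s, w t) = 0 ∧ Phi w = v := by
    intro v hv
    -- the basic equations
    have E : ∀ a, a < n → ∀ j, j < r →
        ∑ b ∈ Ico a n, ∑ k ∈ range (j+1), vv v b k
        = ∑ b ∈ range (a+1), ∑ k ∈ Ico j r, vv v b k := by
      intro a ha j hj
      have h1 := congrFun hv (⟨a, ha⟩, ⟨j, hj⟩)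
      rw [split] at h1
      simp only [Pi.zero_apply] at h1
      linarith
    have G : ∀ a, a + 1 < n → ∀ j, j < r →
        (∑ k ∈ range (j+1), vv v a k) + (∑ k ∈ Ico j r, vv v (a+1) k) = 0 := by
      intro a ha j hj
      have e1 := E a (by omega) j hj
      have e2 := E (a+1) (by omega) j hj
      have d1 : ∑ b ∈ Ico a n, ∑ k ∈ range (j+1), vv v b k
          = (∑ k ∈ range (j+1), vv v a k) + ∑ b ∈ Ico (a+1) n, ∑ k ∈ range (j+1), vv v b k :=
        Finset.sum_eq_sum_Ico_succ_bot (by omega) _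
      have d2 : ∑ b ∈ range (a+1+1), ∑ k ∈ Ico j r, vv v b k
          = (∑ b ∈ range (a+1), ∑ k ∈ Ico j r, vv v b k) + ∑ k ∈ Ico j r, vv v (a+1) k :=
        Finset.sum_range_succ _ _
      linarith
    have R1 : ∀ a, a + 1 < n → ∀ j, j + 1 < r → vv v (a+1) j = vv v a (j+1) := by
      intro a ha j hj
      have g1 := G a ha j (by omega)
      have g2 := G a ha (j+1) hj
      have d1 : ∑ k ∈ range (j+1+1), vv v a k
          = ∑ k ∈ range (j+1), vv v a k + vv v a (j+1) := Finset.sum_range_succ _ _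
      have d2 : ∑ k ∈ Ico j r, vv v (a+1) k
          = vv v (a+1) j + ∑ k ∈ Ico (j+1) r, vv v (a+1) k :=
        Finset.sum_eq_sum_Ico_succ_bot (by omega) _
      linarith
    have R2 : ∀ a, a + 1 < n → vv v (a+1) (r-1) = - ∑ k ∈ range r, vv v a k := by
      intro a ha
      have g1 := G a ha (r-1) (by omega)
      have d0 : r - 1 + 1 = r := by omega
      rw [d0] at g1
      have d2 : ∑ k ∈ Ico (r-1) r, vv v (a+1) k
          = vv v (a+1) (r-1) + ∑ k ∈ Ico (r-1+1) r, vv v (a+1) k :=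
        Finset.sum_eq_sum_Ico_succ_bot (by omega) _
      rw [d0] at d2
      have d3 : ∑ k ∈ Ico r r, vv v (a+1) k = 0 := by simp
      rw [d3] at d2
      linarith
    -- the cyclic function u (on ℤ through ZMod (r+1))
    haveI : NeZero (r+1) := ⟨Nat.succ_ne_zero r⟩
    set u : ZMod (r+1) → ℚ :=
      fun t => if t.val = r then - ∑ k ∈ range r, vv v 0 k else vv v 0 (r - 1 - t.val) with hu
    set uz : ℤ → ℚ := fun z => u ((z : ZMod (r+1))) with huz
    have uzper : ∀ z1 z2 : ℤ, ((r:ℤ)+1) ∣ (z1 - z2) → uz z1 = uz z2 := by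
      intro z1 z2 ⟨k, hk⟩
      rw [huz]
      exact congrArg u (aux_zmod_cast_eq (N := r+1) z1 z2 k (by push_cast; linarith))
    have huNat : ∀ m, m < r → uz (m : ℕ) = vv v 0 (r - 1 - m) := by
      intro m hm
      rw [huz]
      simp only [Int.cast_natCast]
      rw [hu]
      have hval : ((m : ℕ) : ZMod (r+1)).val = m := ZMod.val_cast_of_lt (by omega)
      simp only [hval]
      rw [if_neg (by omega)]
    have huR : uz (r : ℕ) = - ∑ k ∈ range r, vv v 0 k := by
      rw [huz]
      simp only [Int.cast_natCast]
      rw [hu]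
      have hval : ((r : ℕ) : ZMod (r+1)).val = r := ZMod.val_cast_of_lt (by omega)
      simp only [hval, if_true, eq_self_iff_true]
    have husum : ∑ t : ZMod (r+1), u t = 0 := by
      rw [← aux_sum_range_eq u, Finset.sum_range_succ]
      have hc : ∀ i : ℕ, u ((i : ℕ) : ZMod (r+1)) = uz (i:ℕ) := by
        intro i; rw [huz]; simp only [Int.cast_natCast]
      rw [hc r, huR]
      have hc2 : ∀ i ∈ range r, u ((i : ℕ) : ZMod (r+1)) = vv v 0 (r-1-i) := by
        intro i hi; rw [hc i, huNat i (Finset.mem_range.mp hi)]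
      rw [Finset.sum_congr rfl hc2]
      rw [Finset.sum_range_reflect (fun i => vv v 0 i) r]
      ring
    have wino : ∀ z : ℤ, ∀ m : ℕ, (r+1) ∣ m → ∑ i ∈ range m, uz (z - i) = 0 := by
      intro z m hm
      have h1 := aux_window husum ((z : ZMod (r+1))) hm
      rw [← h1]
      refine Finset.sum_congr rfl (fun i _ => ?_)
      rw [huz]
      congr 1
      push_cast
      ring
    have consec : ∀ z : ℤ, ∑ k ∈ range r, uz (z - k) = - uz (z - r) := by
      intro z
      have h0 := wino z (r+1) dvd_rfl
      rw [Finset.sum_range_succ] at h0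
      have : ((r:ℤ)) = ((r:ℕ):ℤ) := by push_cast; ring
      linarith
    -- main structure result : v is given by u
    have key : ∀ a, a < n → ∀ j, j < r →
        vv v a j = uz ((r:ℤ) - 1 - (j:ℤ) - (a:ℤ)) := by
      intro a
      induction a with
      | zero =>
        intro _ j hj
        have h1 : vv v 0 j = vv v 0 (r-1-(r-1-j)) := by congr 1; omega
        rw [h1, ← huNat (r-1-j) (by omega)]
        exact congrArg uz (by omega)
      | succ a ih =>
        intro ha j hj
        by_cases hjr : j + 1 < r
        · rw [R1 a ha j hjr, ih (by omega) (j+1) hjr]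
          exact congrArg uz (by push_cast; ring)
        · have hj1 : j = r - 1 := by omega
          rw [hj1, R2 a ha]
          have hc : ∀ k ∈ range r, vv v a k = uz (((r:ℤ) - 1 - (a:ℤ)) - (k:ℕ)) := by
            intro k hk
            rw [ih (by omega) k (Finset.mem_range.mp hk)]
            exact congrArg uz (by push_cast; ring)
          rw [Finset.sum_congr rfl hc, consec ((r:ℤ) - 1 - (a:ℤ)), neg_neg]
          exact uzper _ _ ⟨0, by push_cast; omega⟩
    -- the P equations coming from the first row block
    have hP : ∀ j, j < r →
        ∑ k ∈ range (j+1), ((∑ t ∈ range (n+1), uz ((r:ℤ)-1-(k:ℤ)-(t:ℕ))) - uz ((r:ℤ)-1-(k:ℤ)-(n:ℤ)))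
        = ∑ i ∈ range (r-j), uz ((r:ℤ)-1-(j:ℤ)-(i:ℕ)) := by
      intro j hj
      have e0 := E 0 (by omega) j hj
      rw [← Finset.range_eq_Ico, Finset.sum_comm, Finset.sum_range_one] at e0
      have hL : ∀ k ∈ range (j+1), ∑ b ∈ range n, vv v b k
          = (∑ t ∈ range (n+1), uz ((r:ℤ)-1-(k:ℤ)-(t:ℕ))) - uz ((r:ℤ)-1-(k:ℤ)-(n:ℤ)) := by
        intro k hk
        have hkr : k < r := by have := Finset.mem_range.mp hk; omega
        have h1 : ∀ b ∈ range n, vv v b k = uz ((r:ℤ)-1-(k:ℤ)-(b:ℕ)) :=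
          fun b hb => key b (Finset.mem_range.mp hb) k hkr
        rw [Finset.sum_congr rfl h1]
        have h2 := Finset.sum_range_succ (fun t : ℕ => uz ((r:ℤ)-1-(k:ℤ)-(t:ℕ))) n
        rw [h2]
        ring
      rw [Finset.sum_congr rfl hL] at e0
      rw [Finset.sum_Ico_eq_sum_range] at e0
      have hR : ∀ i ∈ range (r-j), vv v 0 (j+i) = uz ((r:ℤ)-1-(j:ℤ)-(i:ℕ)) := by
        intro i hi
        have hji : j + i < r := by have := Finset.mem_range.mp hi; omega
        rw [key 0 (by omega) (j+i) hji]
        exact congrArg uz (by push_cast; ring)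
      rw [Finset.sum_congr rfl hR] at e0
      exact e0
    -- the D equations
    have hD : ∀ j, j < r →
        (∑ t ∈ range (n+1), uz ((r:ℤ)-1-(j:ℤ)-(t:ℕ)))
        = uz ((r:ℤ)-1-(j:ℤ)-(n:ℤ)) - uz ((r:ℤ)-(j:ℤ)) := by
      intro j hj
      cases j with
      | zero =>
        have p0 := hP 0 (by omega)
        rw [Finset.sum_range_one] at p0
        have hc : ∀ i ∈ range (r-0), uz ((r:ℤ)-1-((0:ℕ):ℤ)-(i:ℕ)) = uz (((r:ℤ)-1) - (i:ℕ)) := by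
          intro i _
          exact congrArg uz (by push_cast; ring)
        rw [Finset.sum_congr rfl hc] at p0
        have hc2 : r - 0 = r := by omega
        rw [hc2, consec ((r:ℤ)-1)] at p0
        have hc3 : uz ((r:ℤ)-1-(r:ℤ)) = uz ((r:ℤ)-((0:ℕ):ℤ)) := uzper _ _ ⟨-1, by push_cast; ring⟩
        rw [hc3] at p0
        linarith
      | succ i =>
        have p1 := hP (i+1) hj
        have p2 := hP i (by omega)
        rw [Finset.sum_range_succ] at p1
        have hS : ∑ i' ∈ range (r-i), uz ((r:ℤ)-1-(i:ℤ)-(i':ℕ))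
            = uz ((r:ℤ)-1-(i:ℤ)) + ∑ i' ∈ range (r-(i+1)), uz ((r:ℤ)-1-((i+1:ℕ):ℤ)-(i':ℕ)) := by
          have hri : r - i = (r - (i+1)) + 1 := by omega
          rw [hri]
          have h4 := Finset.sum_range_succ' (fun t : ℕ => uz ((r:ℤ)-1-(i:ℤ)-(t:ℕ))) (r - (i+1))
          rw [h4, add_comm]
          congr 1
          · exact congrArg uz (by push_cast; ring)
          · refine Finset.sum_congr rfl (fun t _ => ?_)
            exact congrArg uz (by push_cast; ring)
        rw [hS] at p2
        have a2 : uz ((r:ℤ)-((i+1:ℕ):ℤ)) = uz ((r:ℤ)-1-(i:ℤ)) := congrArg uz (by push_cast; ring)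
        rw [a2]
        linarith [p1, p2]
    -- windows of length n+1 all vanish : first the ones starting at r - j
    have hWzero1 : ∀ j, j < r → ∑ t ∈ range (n+1), uz ((r:ℤ)-(j:ℤ)-(t:ℕ)) = 0 := by
      intro j hj
      have d := hD j hj
      have hs1 : ∑ t ∈ range (n+1), uz ((r:ℤ)-(j:ℤ)-(t:ℕ))
          = uz ((r:ℤ)-(j:ℤ)) + ∑ t ∈ range n, uz ((r:ℤ)-1-(j:ℤ)-(t:ℕ)) := by
        have h4 := Finset.sum_range_succ' (fun t : ℕ => uz ((r:ℤ)-(j:ℤ)-(t:ℕ))) n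
        rw [h4, add_comm]
        congr 1
        · exact congrArg uz (by push_cast; ring)
        · refine Finset.sum_congr rfl (fun t _ => ?_)
          exact congrArg uz (by push_cast; ring)
      have hs2 : ∑ t ∈ range (n+1), uz ((r:ℤ)-1-(j:ℤ)-(t:ℕ))
          = ∑ t ∈ range n, uz ((r:ℤ)-1-(j:ℤ)-(t:ℕ)) + uz ((r:ℤ)-1-(j:ℤ)-(n:ℤ)) := by
        have h4 := Finset.sum_range_succ (fun t : ℕ => uz ((r:ℤ)-1-(j:ℤ)-(t:ℕ))) n
        exact h4
      linarith
    have hWzero : ∀ z : ℤ, ∑ t ∈ range (n+1), uz (z-(t:ℕ)) = 0 := by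
      have hF0 : ∑ t ∈ range (n+1), uz ((0:ℤ)-(t:ℕ)) = 0 := by
        have htot : ∑ i ∈ range (r+1), ∑ t ∈ range (n+1), uz (0-(i:ℕ)-(t:ℕ)) = 0 := by
          rw [Finset.sum_comm]
          refine Finset.sum_eq_zero (fun t _ => ?_)
          have h5 : ∀ i ∈ range (r+1), uz (0-(i:ℕ)-(t:ℕ)) = uz ((0-(t:ℕ)) - (i:ℕ)) := by
            intro i _
            exact congrArg uz (by push_cast; ring)
          rw [Finset.sum_congr rfl h5]
          exact wino _ _ dvd_rfl
        have h6 := Finset.sum_range_succ' (fun i : ℕ => ∑ t ∈ range (n+1), uz (0-(i:ℕ)-(t:ℕ))) r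
        rw [h6] at htot
        have h7 : ∀ i ∈ range r, ∑ t ∈ range (n+1), uz (0-((i+1:ℕ):ℤ)-(t:ℕ)) = 0 := by
          intro i hi
          have hir := Finset.mem_range.mp hi
          have h8 : ∀ t ∈ range (n+1), uz (0-((i+1:ℕ):ℤ)-(t:ℕ)) = uz ((r:ℤ)-((i:ℕ):ℤ)-(t:ℕ)) := by
            intro t _
            refine uzper _ _ ⟨-1, by push_cast; ring⟩
          rw [Finset.sum_congr rfl h8]
          exact hWzero1 i (by omega)
        rw [Finset.sum_congr rfl h7] at htot
        simp only [Finset.sum_const_zero, zero_add] at htot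
        have h9 : ∀ t ∈ range (n+1), uz (0-((0:ℕ):ℤ)-(t:ℕ)) = uz ((0:ℤ)-(t:ℕ)) := by
          intro t _
          exact congrArg uz (by push_cast; ring)
        rw [Finset.sum_congr rfl h9] at htot
        exact htot
      intro z
      have hdv : ((r:ℤ)+1) ∣ (z - (((z : ZMod (r+1))).val : ℕ)) := by
        have h2 : ((z - (((z : ZMod (r+1))).val : ℕ) : ℤ) : ZMod (r+1)) = 0 := by
          push_cast
          rw [sub_eq_zero]
          exact (ZMod.natCast_rightInverse ((z : ZMod (r+1)))).symm
        have h3 := (ZMod.intCast_zmod_eq_zero_iff_dvd _ (r+1)).mp h2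
        have h4 : (((r+1 : ℕ)):ℤ) = (r:ℤ)+1 := by push_cast; ring
        rwa [h4] at h3
      set m := (((z : ZMod (r+1))).val) with hm
      have hmr : m < r + 1 := ZMod.val_lt _
      have hz1 : ∀ t ∈ range (n+1), uz (z-(t:ℕ)) = uz ((m:ℕ)-(t:ℕ)) := by
        intro t _
        refine uzper _ _ ?_
        have : z - (t:ℕ) - ((m:ℕ)-(t:ℕ)) = z - (m:ℕ) := by ring
        rw [this]
        exact hdv
      rw [Finset.sum_congr rfl hz1]
      by_cases hm0 : m = 0
      · rw [hm0]
        have : ∀ t ∈ range (n+1), uz (((0:ℕ):ℤ)-(t:ℕ)) = uz ((0:ℤ)-(t:ℕ)) := by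
          intro t _; exact congrArg uz (by push_cast; ring)
        rw [Finset.sum_congr rfl this]
        exact hF0
      · have : ∀ t ∈ range (n+1), uz ((m:ℕ)-(t:ℕ)) = uz ((r:ℤ)-((r-m:ℕ):ℤ)-(t:ℕ)) := by
          intro t _; exact congrArg uz (by push_cast; omega)
        rw [Finset.sum_congr rfl this]
        exact hWzero1 (r-m) (by omega)
    -- shift invariance by n+1
    have hshift : ∀ z : ℤ, uz (z + ((n:ℤ)+1)) = uz z := by
      intro z
      have h1 := hWzero (z + (n:ℤ) + 1)
      have h2 := hWzero (z + (n:ℤ))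
      have h3 := Finset.sum_range_succ' (fun t : ℕ => uz (z + (n:ℤ) + 1 - (t:ℕ))) n
      have h4 := Finset.sum_range_succ (fun t : ℕ => uz (z + (n:ℤ) - (t:ℕ))) n
      rw [h3] at h1
      rw [h4] at h2
      have h5 : ∀ t ∈ range n, uz (z + (n:ℤ) + 1 - ((t+1:ℕ):ℤ)) = uz (z + (n:ℤ) - (t:ℕ)) := by
        intro t _; exact congrArg uz (by push_cast; ring)
      rw [Finset.sum_congr rfl h5] at h1
      have h6 : uz (z + (n:ℤ) + 1 - ((0:ℕ):ℤ)) = uz (z + ((n:ℤ)+1)) := congrArg uz (by push_cast; ring)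
      rw [h6] at h1
      have h7 : uz (z + (n:ℤ) - ((n:ℕ):ℤ)) = uz z := congrArg uz (by push_cast; ring)
      rw [h7] at h2
      linarith
    have hshiftk : ∀ (m : ℤ) (z : ℤ), uz (z + m*((n:ℤ)+1)) = uz z := by
      intro m
      induction m using Int.induction_on with
      | zero => intro z; exact congrArg uz (by ring)
      | succ i ih =>
        intro z
        have h1 : uz (z + ((i:ℤ)+1)*((n:ℤ)+1)) = uz ((z + (i:ℤ)*((n:ℤ)+1)) + ((n:ℤ)+1)) :=
          congrArg uz (by ring)
        rw [h1, hshift, ih]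
      | pred i ih =>
        intro z
        have h1 := hshift (z + (-(i:ℤ)-1)*((n:ℤ)+1))
        have h2 : uz (z + (-(i:ℤ)-1)*((n:ℤ)+1) + ((n:ℤ)+1)) = uz (z + (-(i:ℤ))*((n:ℤ)+1)) :=
          congrArg uz (by ring)
        rw [h2, ih] at h1
        exact h1.symm
    have hBez : ((s:ℕ):ℤ) = ((n:ℤ)+1) * Nat.gcdA (n+1) (r+1) + ((r:ℤ)+1) * Nat.gcdB (n+1) (r+1) := by
      have h1 := Nat.gcd_eq_gcd_ab (n+1) (r+1)
      rw [hsdef]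
      push_cast at h1 ⊢
      linarith
    have hshift_s : ∀ z : ℤ, uz (z + (s:ℤ)) = uz z := by
      intro z
      have h1 : uz (z + (s:ℤ)) =
          uz ((z + ((r:ℤ)+1)*(Nat.gcdB (n+1) (r+1))) + (Nat.gcdA (n+1) (r+1))*((n:ℤ)+1)) := by
        refine congrArg uz ?_
        rw [hBez]
        ring
      rw [h1, hshiftk]
      exact uzper _ _ ⟨Nat.gcdB (n+1) (r+1), by ring⟩
    have hshift_sk : ∀ (m : ℤ) (z : ℤ), uz (z + m*(s:ℤ)) = uz z := by
      intro m
      induction m using Int.induction_on with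
      | zero => intro z; exact congrArg uz (by ring)
      | succ i ih =>
        intro z
        have h1 : uz (z + ((i:ℤ)+1)*(s:ℤ)) = uz ((z + (i:ℤ)*(s:ℤ)) + (s:ℤ)) :=
          congrArg uz (by ring)
        rw [h1, hshift_s, ih]
      | pred i ih =>
        intro z
        have h1 := hshift_s (z + (-(i:ℤ)-1)*(s:ℤ))
        have h2 : uz (z + (-(i:ℤ)-1)*(s:ℤ) + (s:ℤ)) = uz (z + (-(i:ℤ))*(s:ℤ)) :=
          congrArg uz (by ring)
        rw [h2, ih] at h1
        exact h1.symm
    have hperiod : ∀ z1 z2 : ℤ, (s:ℤ) ∣ (z1 - z2) → uz z1 = uz z2 := by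
      rintro z1 z2 ⟨k, hk⟩
      have h1 := hshift_sk k z2
      have h2 : z2 + k*(s:ℤ) = z1 := by linarith
      rw [h2] at h1
      exact h1
    -- the descended function w
    set w : ZMod s → ℚ := fun b => uz ((b.val : ℕ) : ℤ) with hw
    have hwu : ∀ z : ℤ, uz z = w ((z : ZMod s)) := by
      intro z
      rw [hw]
      refine hperiod z (((z : ZMod s)).val : ℕ) ?_
      have h2 : ((z - (((z : ZMod s)).val : ℕ) : ℤ) : ZMod s) = 0 := by
        push_cast
        rw [sub_eq_zero]
        exact (ZMod.natCast_rightInverse ((z : ZMod s))).symm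
      exact (ZMod.intCast_zmod_eq_zero_iff_dvd _ s).mp h2
    have hwsum : ∑ b : ZMod s, w b = 0 := by
      have h1 := husum
      rw [← aux_sum_range_eq u] at h1
      have h2 : ∀ i ∈ range (r+1), u ((i:ℕ) : ZMod (r+1)) = w ((i:ℕ) : ZMod s) := by
        intro i _
        have e1 : u ((i:ℕ) : ZMod (r+1)) = uz ((i:ℕ):ℤ) := by
          rw [huz]; simp only [Int.cast_natCast]
        rw [e1, hwu (((i:ℕ):ℤ))]
        congr 1
        exact Int.cast_natCast i
      rw [Finset.sum_congr rfl h2] at h1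
      obtain ⟨m, hm⟩ := hsr
      rw [show r + 1 = m * s by rw [hm, Nat.mul_comm]] at h1
      rw [aux_sum_mul w m] at h1
      have hm0 : m ≠ 0 := by rintro rfl; omega
      rw [nsmul_eq_mul] at h1
      rcases mul_eq_zero.mp h1 with h | h
      · exact absurd (Nat.cast_eq_zero.mp h) hm0
      · exact h
    refine ⟨w, hwsum, ?_⟩
    funext p
    obtain ⟨α, j⟩ := p
    have h1 : Phi w (α, j) = w (cmap (α, j)) := rfl
    rw [h1, hcmap]
    rw [← hwu ((r:ℤ) - 1 - ((j:ℕ):ℤ) - ((α:ℕ):ℤ))]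
    rw [← key (α:ℕ) α.isLt (j:ℕ) j.isLt]
    rw [hvv]
    simp only [dif_pos (⟨α.isLt, j.isLt⟩ : (α:ℕ) < n ∧ (j:ℕ) < r)]
  -- injectivity of Phi
  have hinj : Function.Injective Phi := by
    rw [hPhi]
    apply LinearMap.funLeft_injective_of_surjective
    intro b
    set e : ZMod s := ((((r:ℤ) - 1) : ℤ) : ZMod s) - b with hedef
    have hsr' : s ≤ r + 1 := Nat.le_of_dvd (by omega) hsr
    have hev : e.val < s := ZMod.val_lt e
    have hkey : ∀ (a j : ℕ) (ha : a < n) (hj : j < r), j + a = e.val →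
        cmap (⟨a, ha⟩, ⟨j, hj⟩) = b := by
      intro a j ha hj hsum
      rw [hcmap]
      show ((((r:ℤ) - 1 - ((j:ℕ):ℤ) - ((a:ℕ):ℤ)) : ℤ) : ZMod s) = b
      have h1 : ((r:ℤ) - 1 - ((j:ℕ):ℤ) - ((a:ℕ):ℤ)) = ((r:ℤ) - 1) - ((e.val : ℕ) : ℤ) := by
        omega
      rw [h1]
      have h2 : (((e.val : ℕ) : ℤ) : ZMod s) = e := by
        rw [Int.cast_natCast]
        exact ZMod.natCast_rightInverse e
      push_cast
      push_cast at h2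
      rw [h2, hedef]
      push_cast
      ring
    by_cases hc : e.val ≤ r - 1
    · exact ⟨(⟨0, by omega⟩, ⟨e.val, by omega⟩), hkey 0 e.val (by omega) (by omega) (by omega)⟩
    · exact ⟨(⟨1, by omega⟩, ⟨r-1, by omega⟩), hkey 1 (r-1) (by omega) (by omega) (by omega)⟩
  -- the sum functional
  set sumF : (ZMod s → ℚ) →ₗ[ℚ] ℚ :=
    { toFun := fun w => ∑ t : ZMod s, w t
      map_add' := fun x y => by simp [Finset.sum_add_distrib]
      map_smul' := fun c x => by simp [Finset.mul_sum] } with hsumF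
  -- kernel identification
  have hker : LinearMap.ker H.mulVecLin = Submodule.map Phi (LinearMap.ker sumF) := by
    apply le_antisymm
    · intro v hv
      have hv' : H.mulVec v = 0 := by
        have h1 := LinearMap.mem_ker.mp hv
        rwa [Matrix.mulVecLin_apply] at h1
      obtain ⟨w, hw1, hw2⟩ := claimC v hv'
      exact Submodule.mem_map.mpr ⟨w, LinearMap.mem_ker.mpr hw1, hw2⟩
    · rintro x hx
      obtain ⟨w, hw1, rfl⟩ := Submodule.mem_map.mp hx
      have hw1' : ∑ t : ZMod s, w t = 0 := LinearMap.mem_ker.mp hw1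
      have h2 := claimA w hw1'
      rw [LinearMap.mem_ker, Matrix.mulVecLin_apply]
      exact h2
  -- dimension count
  have hfin1 : Module.finrank ℚ (Fin n × Fin r → ℚ) = n * r := by
    simp [Module.finrank_pi]
  have hrn := LinearMap.finrank_range_add_finrank_ker H.mulVecLin
  rw [hfin1] at hrn
  have hkdim : Module.finrank ℚ (LinearMap.ker H.mulVecLin) = s - 1 := by
    rw [hker]
    have hEq := LinearEquiv.finrank_eq (Submodule.equivMapOfInjective Phi hinj (LinearMap.ker sumF))
    rw [← hEq]
    have h1 := LinearMap.finrank_range_add_finrank_ker sumF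
    have h2 : LinearMap.range sumF = ⊤ := by
      rw [LinearMap.range_eq_top]
      intro q
      refine ⟨(fun _ => q / s), ?_⟩
      show ∑ _t : ZMod s, q / (s:ℚ) = q
      rw [Finset.sum_const, Finset.card_univ, ZMod.card, nsmul_eq_mul]
      have hs0' : ((s:ℕ):ℚ) ≠ 0 := Nat.cast_ne_zero.mpr hs0.ne'
      field_simp
    rw [h2, finrank_top] at h1
    have h3 : Module.finrank ℚ (ZMod s → ℚ) = s := by
      simp [Module.finrank_pi, ZMod.card]
    rw [h3, Module.finrank_self] at h1
    omega
  have hrdef : H.rank = Module.finrank ℚ (LinearMap.range H.mulVecLin) := rfl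
  rw [hrdef]
  omega

/-- with `s = gcd(n+1, r+1)`, the matrices `H_CI` and `H_CII`
both have corank `s - 1`, i.e. rank `nr - (s-1)`. -/
theorem stmt_5 (n r : ℕ) (hn : 2 ≤ n) (hr : 2 ≤ r)
    (Nr Mr : Matrix (Fin r) (Fin r) ℚ)
    (hNr : ∀ i j : Fin r, Nr i j = if i ≤ j then -1 else 0)
    (hMr : Mr = -Nrᵀ)
    (HCI HCII : Matrix (Fin n × Fin r) (Fin n × Fin r) ℚ)
    (hHCI : ∀ (α β : Fin n) (j k : Fin r), HCI (α, j) (β, k) =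
      if α = β then (Mr + Nr) j k else if α < β then Mr j k else Nr j k)
    (hHCII : ∀ (α β : Fin n) (j k : Fin r), HCII (α, j) (β, k) =
      if α = β then (Mr + Nr) j k else if α < β then Nr j k else Mr j k) :
    HCI.rank = n * r - (Nat.gcd (n + 1) (r + 1) - 1) ∧
    HCII.rank = n * r - (Nat.gcd (n + 1) (r + 1) - 1) := by
  have hMr' : ∀ j k : Fin r, Mr j k = if k ≤ j then 1 else 0 := by
    intro j k
    rw [hMr]
    have h1 : (-Nrᵀ) j k = -(Nr k j) := rfl
    rw [h1, hNr k j]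
    by_cases h : k ≤ j
    · rw [if_pos h, if_pos h]; ring
    · rw [if_neg h, if_neg h]; ring
  have hMN : ∀ j k : Fin r, (Mr + Nr) j k
      = (if k ≤ j then (1:ℚ) else 0) - (if j ≤ k then 1 else 0) := by
    intro j k
    have h1 : (Mr + Nr) j k = Mr j k + Nr j k := rfl
    rw [h1, hMr', hNr]
    by_cases h2 : j ≤ k <;> by_cases h3 : k ≤ j <;>
      simp [h2, h3] <;> ring
  have entryCI : ∀ (α β : Fin n) (j k : Fin r), HCI (α, j) (β, k) =
      (if (α:ℕ) ≤ (β:ℕ) ∧ (k:ℕ) ≤ (j:ℕ) then 1 else 0) -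
      (if (β:ℕ) ≤ (α:ℕ) ∧ (j:ℕ) ≤ (k:ℕ) then 1 else 0) := by
    intro α β j k
    rw [hHCI]
    rcases lt_trichotomy α β with h | h | h
    · rw [if_neg (Fin.ne_of_lt h), if_pos h, hMr']
      by_cases h3 : k ≤ j <;> simp [h3, h.le, h.not_ge]
    · rw [if_pos h, hMN]
      by_cases h2 : j ≤ k <;> by_cases h3 : k ≤ j <;>
        simp [h2, h3, le_of_eq h, le_of_eq h.symm]
    · rw [if_neg (Fin.ne_of_gt h), if_neg (by exact fun hc => absurd hc (not_lt_of_gt h)), hNr]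
      by_cases h2 : j ≤ k <;> simp [h2, h.le, h.not_ge]
  set e : (Fin n × Fin r) ≃ (Fin n × Fin r) := Equiv.prodCongr (Fin.revPerm) (Equiv.refl _) with he
  have entryCII : ∀ (α β : Fin n) (j k : Fin r), (HCII.submatrix e e) (α, j) (β, k) =
      (if (α:ℕ) ≤ (β:ℕ) ∧ (k:ℕ) ≤ (j:ℕ) then 1 else 0) -
      (if (β:ℕ) ≤ (α:ℕ) ∧ (j:ℕ) ≤ (k:ℕ) then 1 else 0) := by
    intro α β j k
    have h0 : (HCII.submatrix e e) (α, j) (β, k) = HCII (α.rev, j) (β.rev, k) := rfl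
    rw [h0, hHCII]
    rcases lt_trichotomy α β with h | h | h
    · have h1 : β.rev < α.rev := by rw [Fin.rev_lt_rev]; exact h
      rw [if_neg (Fin.ne_of_gt h1), if_neg (by exact fun hc => absurd hc (not_lt_of_gt h1)), hMr']
      by_cases h3 : k ≤ j <;> simp [h3, h.le, h.not_ge]
    · rw [if_pos (by rw [h]), hMN]
      by_cases h2 : j ≤ k <;> by_cases h3 : k ≤ j <;>
        simp [h2, h3, le_of_eq h, le_of_eq h.symm]
    · have h1 : α.rev < β.rev := by rw [Fin.rev_lt_rev]; exact h
      rw [if_neg (Fin.ne_of_lt h1), if_pos h1, hNr]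
      by_cases h2 : j ≤ k <;> simp [h2, h.le, h.not_ge]
  constructor
  · exact aux_rank n r hn hr HCI entryCI
  · have h1 := aux_rank n r hn hr (HCII.submatrix e e) entryCII
    rwa [Matrix.rank_submatrix] at h1
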